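/- Let f be a homeomorphism of a compact metric space X and let (p_n)_{n≥0} be periodic points of f. Suppose that for each n ≥ 0 there are a subset X_n ⊆ Orb(p_{n+1}) and a map ρ_n : X_n → Orb(p_n) witnessing that Orb(p_{n+1}) is a (γ_n,κ_n)-good approximation of Orb(p_n), where γ_n > 0, κ_n ∈ (0,1] and ∏_{n≥0} κ_n > 0. Define Y_0 := X_0 and Y_n := ρ_n^{-1}(Y_{n−1}) for n ≥ 1, and set Y := ⋂_{N≥0} closure(⋃_{n≥N} Y_n). If the periodic measures μ_{p_n} converge in the weak* topology to a Borel probability measure μ, then μ(Y) ≥ ∏_{n=0}^{∞} κ_n > 0. -/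

import Mathlib

open MeasureTheory Filter Topology Function
open scoped Classical ENNReal

/-- The orbit `{p, f(p), …, f^{π(p)−1}(p)}` of a point under `f`, where `π(p)` is the
minimal period of `p`. -/
def orbit {X : Type*} (f : X → X) (p : X) : Set X :=
  (fun i => f^[i] p) '' Set.Iio (Function.minimalPeriod f p)

/-- `(S, ρ)` witnesses that the orbit of `q` is a `(γ,κ)`-good approximation of the
orbit of `p`. -/
def GoodApproxWitness {X : Type*} [MetricSpace X] (f : X → X) (γ κ : ℝ) (p q : X)
    (S : Finset X) (ρ : X → X) : Prop :=
  (↑S : Set X) ⊆ orbit f q ∧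
  (∀ x ∈ S, ρ x ∈ orbit f p) ∧
  κ < (S.card : ℝ) / (Function.minimalPeriod f q : ℝ) ∧
  (∀ x ∈ S, ∀ i < Function.minimalPeriod f p, dist (f^[i] x) (f^[i] (ρ x)) < γ) ∧
  (∀ y₁ ∈ orbit f p, ∀ y₂ ∈ orbit f p,
    (S.filter fun x => ρ x = y₁).card = (S.filter fun x => ρ x = y₂).card)

/-- The periodic measure `μ_p = (1/π(p)) Σ_{i<π(p)} δ_{f^i(p)}`. -/
noncomputable def periodicMeasure {X : Type*} [MeasurableSpace X] (f : X → X) (p : X) :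
    Measure X :=
  (Function.minimalPeriod f p : ℝ≥0∞)⁻¹ •
    ∑ i ∈ Finset.range (Function.minimalPeriod f p), Measure.dirac (f^[i] p)

/-- Weak* convergence of measures: `∫φ dμₙ → ∫φ dμ` for every continuous `φ : X → ℝ`. -/
def WeakTendstoC {X : Type*} [TopologicalSpace X] [MeasurableSpace X]
    (μs : ℕ → Measure X) (μ : Measure X) : Prop :=
  ∀ φ : C(X, ℝ), Tendsto (fun n => ∫ x, φ x ∂(μs n)) atTop (𝓝 (∫ x, φ x ∂μ))

lemma isProb_periodicMeasure {X : Type*} [MeasurableSpace X] (f : X → X) (p : X)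
    (hp : p ∈ Function.periodicPts f) : IsProbabilityMeasure (periodicMeasure f p) := by
  have hπ : 0 < Function.minimalPeriod f p := Function.minimalPeriod_pos_of_mem_periodicPts hp
  constructor
  rw [periodicMeasure, Measure.smul_apply, Measure.coe_finset_sum]
  simp only [Finset.sum_apply, Measure.dirac_apply_of_mem (Set.mem_univ _)]
  rw [Finset.sum_const, Finset.card_range, nsmul_eq_mul, mul_one, smul_eq_mul]
  exact ENNReal.inv_mul_cancel (by exact_mod_cast hπ.ne') (ENNReal.natCast_ne_top _)

lemma le_periodicMeasure {X : Type*} [MeasurableSpace X] [MeasurableSingletonClass X]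
    (f : X → X) (p : X) (A : Finset X) (hA : ↑A ⊆ orbit f p) :
    (A.card : ℝ≥0∞) / (Function.minimalPeriod f p : ℝ≥0∞) ≤ periodicMeasure f p ↑A := by
  classical
  set π := Function.minimalPeriod f p
  have hAm : MeasurableSet (↑A : Set X) := A.finite_toSet.measurableSet
  have key : (A.card : ℝ≥0∞) ≤
      ∑ i ∈ Finset.range π, Measure.dirac (f^[i] p) ↑A := by
    have : ∀ i ∈ Finset.range π, Measure.dirac (f^[i] p) ↑A
        = Set.indicator (↑A) (fun _ => (1 : ℝ≥0∞)) (f^[i] p) := fun i _ =>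
      Measure.dirac_apply' _ hAm
    rw [Finset.sum_congr rfl this]
    set T := (Finset.range π).filter (fun i => f^[i] p ∈ A) with hT
    have hsurj : Set.SurjOn (fun i => f^[i] p) ↑T ↑A := by
      intro a ha
      obtain ⟨i, hi, hia⟩ := hA ha
      have haA : a ∈ A := ha
      refine ⟨i, ?_, hia⟩
      rw [hT, Finset.mem_coe, Finset.mem_filter, Finset.mem_range]
      exact ⟨Set.mem_Iio.mp hi, by simpa [hia] using haA⟩
    have hcard : A.card ≤ T.card := Finset.card_le_card_of_surjOn _ hsurj
    calc (A.card : ℝ≥0∞) ≤ (T.card : ℝ≥0∞) := by exact_mod_cast hcard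
      _ = ∑ i ∈ T, (1 : ℝ≥0∞) := by simp
      _ = ∑ i ∈ T, Set.indicator (↑A) (fun _ => (1 : ℝ≥0∞)) (f^[i] p) := by
          refine Finset.sum_congr rfl fun i hi => ?_
          rw [hT, Finset.mem_filter] at hi
          simp [Set.indicator_of_mem, hi.2]
      _ ≤ ∑ i ∈ Finset.range π, Set.indicator (↑A) (fun _ => (1 : ℝ≥0∞)) (f^[i] p) :=
          Finset.sum_le_sum_of_subset (Finset.filter_subset _ _)
  rw [periodicMeasure, Measure.smul_apply, smul_eq_mul, ENNReal.div_eq_inv_mul,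
    Measure.finset_sum_apply]
  exact mul_le_mul_right key _

theorem measure_limsup_preimages_pos {X : Type*} [MetricSpace X] [CompactSpace X]
    [MeasurableSpace X] [BorelSpace X]
    (f : X ≃ₜ X) (p : ℕ → X) (γ κ : ℕ → ℝ)
    (S : ℕ → Finset X) (ρ : ℕ → X → X)
    (hp : ∀ n, p n ∈ Function.periodicPts ⇑f)
    (hγ : ∀ n, 0 < γ n) (hκ : ∀ n, 0 < κ n ∧ κ n ≤ 1)
    (hwit : ∀ n, GoodApproxWitness ⇑f (γ n) (κ n) (p n) (p (n + 1)) (S n) (ρ n))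
    (Y : ℕ → Finset X)
    (hY0 : Y 0 = S 0)
    (hYrec : ∀ n, 1 ≤ n → Y n = (S n).filter fun x => ρ n x ∈ Y (n - 1))
    (c : ℝ) (hc : 0 < c)
    (hprod : Tendsto (fun N => ∏ n ∈ Finset.range (N + 1), κ n) atTop (𝓝 c))
    (μ : Measure X) (hμ : IsProbabilityMeasure μ)
    (hconv : WeakTendstoC (fun n => periodicMeasure ⇑f (p n)) μ) :
    ENNReal.ofReal c ≤ μ (⋂ N : ℕ, closure (⋃ n ∈ Set.Ici N, (↑(Y n) : Set X))) ∧
      0 < μ (⋂ N : ℕ, closure (⋃ n ∈ Set.Ici N, (↑(Y n) : Set X))) := by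
  classical
  set P : ℕ → ℝ := fun n => ∏ k ∈ Finset.range (n + 1), κ k with hP
  have hπpos : ∀ n, 0 < Function.minimalPeriod (⇑f) (p n) := fun n =>
    Function.minimalPeriod_pos_of_mem_periodicPts (hp n)
  have hπRpos : ∀ n, (0 : ℝ) < (Function.minimalPeriod (⇑f) (p n) : ℝ) := fun n => by
    exact_mod_cast hπpos n
  have hPpos : ∀ n, 0 < P n := fun n => Finset.prod_pos fun k _ => (hκ k).1
  have hPanti : Antitone P := antitone_nat_of_succ_le fun n => by
    rw [hP]
    simp only [Finset.prod_range_succ (n := n + 1)]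
    nlinarith [hPpos n, (hκ (n + 1)).1, (hκ (n + 1)).2,
      Finset.prod_pos (fun k (_ : k ∈ Finset.range (n + 1)) => (hκ k).1)]
  have hcP : ∀ n, c ≤ P n := fun n =>
    le_of_tendsto hprod (eventually_atTop.mpr ⟨n, fun m hm => hPanti hm⟩)
  -- Y n is contained in the orbit of p (n+1)
  have hYorb : ∀ n, (↑(Y n) : Set X) ⊆ orbit (⇑f) (p (n + 1)) := by
    intro n
    cases n with
    | zero => rw [hY0]; exact (hwit 0).1
    | succ m =>
      rw [hYrec (m + 1) (by omega)]
      exact fun x hx => (hwit (m + 1)).1 (Finset.filter_subset _ _ (by exact_mod_cast hx))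
  -- the counting estimate
  have hcount : ∀ n, P n * (Function.minimalPeriod (⇑f) (p (n + 1)) : ℝ) ≤ (Y n).card := by
    intro n
    induction n with
    | zero =>
      have h := (hwit 0).2.2.1
      rw [lt_div_iff₀ (hπRpos 1)] at h
      rw [hY0]
      simpa [hP] using h.le
    | succ n ih =>
      obtain ⟨hS, hρ, hκS, -, hfib⟩ := hwit (n + 1)
      have hYne : (Y n).Nonempty := by
        rw [← Finset.card_pos]
        have : (0 : ℝ) < (Y n).card :=
          lt_of_lt_of_le (mul_pos (hPpos n) (hπRpos (n + 1))) ih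
        exact_mod_cast this
      obtain ⟨y₀, hy₀⟩ := hYne
      have hy₀orb : y₀ ∈ orbit (⇑f) (p (n + 1)) := hYorb n hy₀
      set t := ((S (n + 1)).filter fun x => ρ (n + 1) x = y₀).card with ht
      have hfib' : ∀ y ∈ orbit (⇑f) (p (n + 1)),
          ((S (n + 1)).filter fun x => ρ (n + 1) x = y).card = t := fun y hy =>
        hfib y hy y₀ hy₀orb
      have hYeq : Y (n + 1) = (S (n + 1)).filter fun x => ρ (n + 1) x ∈ Y n := by
        simpa using hYrec (n + 1) (by omega)
      -- Fact B : card (Y (n+1)) = card (Y n) * t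
      have hB : (Y (n + 1)).card = (Y n).card * t := by
        rw [Finset.card_eq_sum_card_fiberwise
          (f := ρ (n + 1)) (t := Y n)
          (fun x hx => by rw [hYeq] at hx; exact (Finset.mem_filter.mp hx).2)]
        have : ∀ y ∈ Y n, ((Y (n + 1)).filter fun x => ρ (n + 1) x = y).card = t := by
          intro y hy
          have : ((Y (n + 1)).filter fun x => ρ (n + 1) x = y)
              = ((S (n + 1)).filter fun x => ρ (n + 1) x = y) := by
            ext x
            simp only [hYeq, Finset.mem_filter, and_assoc]
            constructor
            · rintro ⟨h1, -, h3⟩; exact ⟨h1, h3⟩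
            · rintro ⟨h1, h3⟩; exact ⟨h1, h3 ▸ hy, h3⟩
          rw [this]
          exact hfib' y (hYorb n hy)
        rw [Finset.sum_congr rfl this, Finset.sum_const, smul_eq_mul]
      -- Fact C : card (S (n+1)) = π(p (n+1)) * t
      have hC : (S (n + 1)).card = Function.minimalPeriod (⇑f) (p (n + 1)) * t := by
        set orbF := (Finset.range (Function.minimalPeriod (⇑f) (p (n + 1)))).image
          (fun i => (⇑f)^[i] (p (n + 1))) with horbF
        have horbeq : (↑orbF : Set X) = orbit (⇑f) (p (n + 1)) := by
          rw [horbF, Finset.coe_image, Finset.coe_range]; rfl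
        have hcardorb : orbF.card = Function.minimalPeriod (⇑f) (p (n + 1)) := by
          rw [horbF, Finset.card_image_of_injOn, Finset.card_range]
          rw [Finset.coe_range]
          exact Function.iterate_injOn_Iio_minimalPeriod
        rw [Finset.card_eq_sum_card_fiberwise
          (f := ρ (n + 1)) (t := orbF)
          (fun x hx => by
            rw [horbeq]; exact hρ x hx)]
        rw [Finset.sum_congr rfl (fun y hy => hfib' y (by rw [← horbeq]; exact_mod_cast hy)),
          Finset.sum_const, smul_eq_mul, hcardorb]
      -- assemble
      have hκS' : κ (n + 1) * (Function.minimalPeriod (⇑f) (p (n + 2)) : ℝ)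
          ≤ ((S (n + 1)).card : ℝ) := by
        rw [lt_div_iff₀ (hπRpos (n + 2))] at hκS
        exact hκS.le
      have hPsucc : P (n + 1) = P n * κ (n + 1) := Finset.prod_range_succ _ _
      have htnn : (0 : ℝ) ≤ (t : ℝ) := Nat.cast_nonneg t
      have hCr : ((S (n + 1)).card : ℝ)
          = (Function.minimalPeriod (⇑f) (p (n + 1)) : ℝ) * t := by exact_mod_cast hC
      have hBr : ((Y (n + 1)).card : ℝ) = ((Y n).card : ℝ) * t := by exact_mod_cast hB
      calc P (n + 1) * (Function.minimalPeriod (⇑f) (p (n + 2)) : ℝ)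
          = P n * (κ (n + 1) * (Function.minimalPeriod (⇑f) (p (n + 2)) : ℝ)) := by
            rw [hPsucc]; ring
        _ ≤ P n * ((S (n + 1)).card : ℝ) :=
            mul_le_mul_of_nonneg_left hκS' (hPpos n).le
        _ = (P n * (Function.minimalPeriod (⇑f) (p (n + 1)) : ℝ)) * t := by
            rw [hCr]; ring
        _ ≤ ((Y n).card : ℝ) * t := mul_le_mul_of_nonneg_right ih htnn
        _ = ((Y (n + 1)).card : ℝ) := hBr.symm
  -- package the measures as probability measures and use portmanteau
  haveI : ∀ n, IsProbabilityMeasure (periodicMeasure (⇑f) (p n)) := fun n =>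
    isProb_periodicMeasure _ _ (hp n)
  set μP : ProbabilityMeasure X := ⟨μ, hμ⟩ with hμP
  set μsP : ℕ → ProbabilityMeasure X := fun n =>
    ⟨periodicMeasure (⇑f) (p n), isProb_periodicMeasure _ _ (hp n)⟩ with hμsP
  have htend : Tendsto μsP atTop (𝓝 μP) := by
    rw [ProbabilityMeasure.tendsto_iff_forall_integral_tendsto]
    intro g
    exact hconv g.toContinuousMap
  set F : ℕ → Set X := fun N => closure (⋃ n ∈ Set.Ici N, (↑(Y n) : Set X)) with hF
  have hFclosed : ∀ N, IsClosed (F N) := fun N => isClosed_closure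
  have hkey : ∀ N, ENNReal.ofReal c ≤ μ (F N) := by
    intro N
    have hlimsup := ProbabilityMeasure.limsup_measure_closed_le_of_tendsto htend (hFclosed N)
    refine le_trans ?_ hlimsup
    refine le_trans ?_ (liminf_le_limsup)
    refine le_liminf_of_le (by isBoundedDefault) ?_
    rw [eventually_atTop]
    refine ⟨N + 1, fun n hn => ?_⟩
    -- for n ≥ N + 1, μ_{p n} (F N) ≥ ofReal c
    obtain ⟨m, rfl⟩ : ∃ m, n = m + 1 := ⟨n - 1, by omega⟩
    have hmN : N ≤ m := by omega
    have hsub : (↑(Y m) : Set X) ⊆ F N := by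
      refine subset_trans ?_ subset_closure
      exact Set.subset_biUnion_of_mem (u := fun n => (↑(Y n) : Set X))
        (show m ∈ Set.Ici N from hmN)
    have h1 : (((Y m).card : ℝ≥0∞) / (Function.minimalPeriod (⇑f) (p (m + 1)) : ℝ≥0∞))
        ≤ periodicMeasure (⇑f) (p (m + 1)) ↑(Y m) :=
      le_periodicMeasure (⇑f) (p (m + 1)) (Y m) (hYorb m)
    have h2 : periodicMeasure (⇑f) (p (m + 1)) ↑(Y m)
        ≤ (μsP (m + 1) : Measure X) (F N) := by
      exact measure_mono hsub
    refine le_trans ?_ (le_trans h1 h2)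
    have hreal : c ≤ ((Y m).card : ℝ) / (Function.minimalPeriod (⇑f) (p (m + 1)) : ℝ) := by
      rw [le_div_iff₀ (hπRpos (m + 1))]
      calc c * (Function.minimalPeriod (⇑f) (p (m + 1)) : ℝ)
          ≤ P m * (Function.minimalPeriod (⇑f) (p (m + 1)) : ℝ) :=
            mul_le_mul_of_nonneg_right (hcP m) (hπRpos (m + 1)).le
        _ ≤ ((Y m).card : ℝ) := hcount m
    calc ENNReal.ofReal c
        ≤ ENNReal.ofReal (((Y m).card : ℝ) / (Function.minimalPeriod (⇑f) (p (m + 1)) : ℝ)) :=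
          ENNReal.ofReal_le_ofReal hreal
      _ = ((Y m).card : ℝ≥0∞) / (Function.minimalPeriod (⇑f) (p (m + 1)) : ℝ≥0∞) := by
          rw [ENNReal.ofReal_div_of_pos (hπRpos (m + 1))]
          simp [ENNReal.ofReal_natCast]
  -- intersect
  have hFanti : Antitone F := fun N M hNM => by
    exact closure_mono (Set.biUnion_subset_biUnion_left (Set.Ici_subset_Ici.mpr hNM))
  have hiInter : ENNReal.ofReal c ≤ μ (⋂ N : ℕ, F N) := by
    have htend' : Tendsto (fun N => μ (F N)) atTop (𝓝 (μ (⋂ N, F N))) := by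
      refine tendsto_measure_iInter_atTop (fun N => (hFclosed N).measurableSet.nullMeasurableSet)
        hFanti ⟨0, ?_⟩
      exact (measure_lt_top μ _).ne
    exact ge_of_tendsto htend' (Eventually.of_forall hkey)
  refine ⟨hiInter, lt_of_lt_of_le ?_ hiInter⟩
  exact ENNReal.ofReal_pos.mpr hc
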